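/- Let n ≥ 2 and let K, L ∈ 𝒦₀(ℝⁿ). Then ∫_{S^{n−1}} |ρ_K(u)^{−1} − ρ_L(u)^{−1}| dσ(u) = ∫_{S^{n−1}} |h_{K°}(u) − h_{L°}(u)| dσ(u) ≤ ∫_{S^{n−1}} (h_{K°}(u) + h_{L°}(u) − 2·h_{K°∩L°}(u)) dσ(u), with equality if and only if K° ∪ L° = (K∩L)°. -/

import Mathlib

open MeasureTheory

/-- The support function `h_K(u) = sup_{x ∈ K} ⟪x, u⟫` of a set `K ⊆ ℝⁿ`. -/
noncomputable def suppFn {n : ℕ} (K : Set (EuclideanSpace ℝ (Fin n)))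
    (u : EuclideanSpace ℝ (Fin n)) : ℝ :=
  sSup ((fun x => (inner ℝ x u : ℝ)) '' K)

/-- The radial function `ρ_K(u) = max {r : r • u ∈ K}` of a set `K ⊆ ℝⁿ`. -/
noncomputable def radialFn {n : ℕ} (K : Set (EuclideanSpace ℝ (Fin n)))
    (u : EuclideanSpace ℝ (Fin n)) : ℝ :=
  sSup {r : ℝ | r • u ∈ K}

/-- The polar body `K° = {y : ⟪x, y⟫ ≤ 1 for all x ∈ K}` of a set `K ⊆ ℝⁿ`. -/
def polarBody {n : ℕ} (K : Set (EuclideanSpace ℝ (Fin n))) :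
    Set (EuclideanSpace ℝ (Fin n)) :=
  {y | ∀ x ∈ K, (inner ℝ x y : ℝ) ≤ 1}

/-- The uniform (rotation invariant) probability measure `σ` on the unit sphere
`S^{n-1} ⊆ ℝⁿ`. -/
noncomputable def sphereProb (n : ℕ) :
    Measure (Metric.sphere (0 : EuclideanSpace ℝ (Fin n)) 1) :=
  ((volume : Measure (EuclideanSpace ℝ (Fin n))).toSphere Set.univ)⁻¹ •
    (volume : Measure (EuclideanSpace ℝ (Fin n))).toSphere

open scoped RealInnerProductSpace

namespace Stmt10Aux

open scoped Pointwise

variable {n : ℕ} {A B K : Set (EuclideanSpace ℝ (Fin n))} {u v c : EuclideanSpace ℝ (Fin n)}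

lemma bddAbove_img (hA : IsCompact A) (u : EuclideanSpace ℝ (Fin n)) :
    BddAbove ((fun x => (inner ℝ x u : ℝ)) '' A) :=
  (hA.image (continuous_id.inner continuous_const)).bddAbove

lemma suppFn_le (hne : A.Nonempty) {c : ℝ} (h : ∀ x ∈ A, ⟪x, u⟫ ≤ c) : suppFn A u ≤ c :=
  csSup_le (hne.image _) (by rintro _ ⟨x, hx, rfl⟩; exact h x hx)

lemma le_suppFn (hA : IsCompact A) {x : EuclideanSpace ℝ (Fin n)} (hx : x ∈ A) :
    ⟪x, u⟫ ≤ suppFn A u :=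
  le_csSup (bddAbove_img hA u) ⟨x, hx, rfl⟩

lemma exists_suppFn (hA : IsCompact A) (hne : A.Nonempty) (u : EuclideanSpace ℝ (Fin n)) :
    ∃ x ∈ A, suppFn A u = ⟪x, u⟫ := by
  have hc : IsCompact ((fun x => (inner ℝ x u : ℝ)) '' A) :=
    hA.image (continuous_id.inner continuous_const)
  have h := hc.sSup_mem (hne.image _)
  obtain ⟨x, hx, hxe⟩ := h
  exact ⟨x, hx, hxe.symm⟩

lemma suppFn_zero (hne : A.Nonempty) : suppFn A 0 = 0 := by
  have : (fun x => (inner ℝ x (0:EuclideanSpace ℝ (Fin n)) : ℝ)) '' A = {0} := by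
    apply Set.eq_singleton_iff_nonempty_unique_mem.2
    exact ⟨hne.image _, by rintro _ ⟨x, hx, rfl⟩; simp⟩
  rw [suppFn, this, csSup_singleton]

lemma suppFn_mono (hB : IsCompact B) (hne : A.Nonempty) (hAB : A ⊆ B) :
    suppFn A u ≤ suppFn B u :=
  suppFn_le hne fun x hx => le_suppFn hB (hAB hx)

lemma suppFn_combo (hA : IsCompact A) (hne : A.Nonempty) {p q : ℝ} (hp : 0 ≤ p) (hq : 0 ≤ q) :
    suppFn A (p • u + q • v) ≤ p * suppFn A u + q * suppFn A v := by
  refine suppFn_le hne fun x hx => ?_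
  have h1 : ⟪x, p • u + q • v⟫ = p * ⟪x, u⟫ + q * ⟪x, v⟫ := by
    rw [inner_add_right, real_inner_smul_right, real_inner_smul_right]
  rw [h1]
  gcongr <;> [exact le_suppFn hA hx; exact le_suppFn hA hx]

lemma suppFn_smul (hA : IsCompact A) (hne : A.Nonempty) {r : ℝ} (hr : 0 < r) :
    suppFn A (r • u) = r * suppFn A u := by
  refine le_antisymm (suppFn_le hne fun x hx => ?_) ?_
  · rw [real_inner_smul_right]; exact mul_le_mul_of_nonneg_left (le_suppFn hA hx) hr.le
  · rw [← le_div_iff₀' hr]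
    refine suppFn_le hne fun x hx => ?_
    rw [le_div_iff₀' hr, ← real_inner_smul_right]
    exact le_suppFn hA hx

lemma abs_suppFn_sub {R : ℝ} (hA : IsCompact A) (hne : A.Nonempty)
    (hR : A ⊆ Metric.closedBall 0 R) :
    |suppFn A u - suppFn A v| ≤ R * ‖u - v‖ := by
  have key : ∀ w w' : EuclideanSpace ℝ (Fin n), suppFn A w - suppFn A w' ≤ R * ‖w - w'‖ := by
    intro w w'
    rw [sub_le_iff_le_add]
    refine suppFn_le hne fun x hx => ?_
    have : ⟪x, w⟫ = ⟪x, w'⟫ + ⟪x, w - w'⟫ := by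
      rw [← inner_add_right]; congr 1; abel
    rw [this]
    have h2 : ⟪x, w - w'⟫ ≤ R * ‖w - w'‖ := by
      calc ⟪x, w - w'⟫ ≤ ‖x‖ * ‖w - w'‖ := real_inner_le_norm x _
        _ ≤ R * ‖w - w'‖ := by
            have := hR hx
            rw [Metric.mem_closedBall, dist_zero_right] at this
            exact mul_le_mul_of_nonneg_right this (norm_nonneg _)
    linarith [le_suppFn hA hx (u := w')]
  rw [abs_sub_le_iff]
  refine ⟨key u v, ?_⟩
  have := key v u
  rwa [norm_sub_rev] at this

lemma continuous_suppFn (hA : IsCompact A) (hne : A.Nonempty) :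
    Continuous (suppFn A) := by
  obtain ⟨R, hR⟩ := hA.isBounded.subset_closedBall 0
  have hR0 : 0 ≤ max R 0 := le_max_right _ _
  have hR' : A ⊆ Metric.closedBall 0 (max R 0) :=
    hR.trans (Metric.closedBall_subset_closedBall (le_max_left _ _))
  refine (LipschitzWith.of_dist_le_mul (K := ⟨max R 0, hR0⟩) fun x y => ?_).continuous
  rw [Real.dist_eq, dist_eq_norm]
  exact abs_suppFn_sub (u := x) (v := y) hA hne hR'

lemma zero_mem_polar : (0 : EuclideanSpace ℝ (Fin n)) ∈ polarBody K :=
  fun x _ => by simp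

lemma polar_convex : Convex ℝ (polarBody K) := by
  intro y hy z hz p q hp hq hpq x hx
  have : (inner ℝ x (p • y + q • z) : ℝ) = p * ⟪x, y⟫ + q * ⟪x, z⟫ := by
    rw [inner_add_right, real_inner_smul_right, real_inner_smul_right]
  rw [this]
  calc p * ⟪x, y⟫ + q * ⟪x, z⟫ ≤ p * 1 + q * 1 := by
        gcongr <;> [exact hy x hx; exact hz x hx]
    _ = 1 := by rw [mul_one, mul_one, hpq]

lemma polar_isClosed : IsClosed (polarBody K) := by
  have : polarBody K = ⋂ x ∈ K, {y : EuclideanSpace ℝ (Fin n) | (inner ℝ x y : ℝ) ≤ 1} := by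
    ext y; simp [polarBody]
  rw [this]
  exact isClosed_biInter fun x _ =>
    isClosed_le (continuous_const.inner continuous_id) continuous_const

lemma polar_antitone (hAB : A ⊆ B) : polarBody B ⊆ polarBody A :=
  fun y hy x hx => hy x (hAB hx)

lemma polar_union : polarBody (A ∪ B) = polarBody A ∩ polarBody B := by
  ext y
  simp only [polarBody, Set.mem_setOf_eq, Set.mem_union, Set.mem_inter_iff, or_imp, forall_and]

lemma polar_isCompact {ε : ℝ} (hε : 0 < ε) (hball : Metric.ball 0 ε ⊆ K) :
    IsCompact (polarBody K) := by
  refine (isCompact_closedBall (0 : EuclideanSpace ℝ (Fin n)) (2 / ε)).of_isClosed_subset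
    polar_isClosed fun y hy => ?_
  rw [Metric.mem_closedBall, dist_zero_right]
  rcases eq_or_ne y 0 with rfl | hy0
  · simp; positivity
  · have hny : 0 < ‖y‖ := norm_pos_iff.2 hy0
    set x := (ε / (2 * ‖y‖)) • y with hxdef
    have hxK : x ∈ K := by
      apply hball
      rw [Metric.mem_ball, dist_zero_right, hxdef, norm_smul, Real.norm_eq_abs]
      have : |ε / (2 * ‖y‖)| = ε / (2 * ‖y‖) := abs_of_pos (by positivity)
      rw [this]
      have h3 : ε / (2 * ‖y‖) * ‖y‖ = ε / 2 := by field_simp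
      rw [h3]; linarith
    have := hy x hxK
    rw [hxdef, real_inner_smul_left, real_inner_self_eq_norm_sq] at this
    have h2 : ε / (2 * ‖y‖) * (‖y‖ * ‖y‖) = ε * ‖y‖ / 2 := by
      field_simp
    rw [show (‖y‖ : ℝ)^2 = ‖y‖ * ‖y‖ from sq ‖y‖ ▸ rfl, h2] at this
    rw [le_div_iff₀ hε]
    nlinarith

lemma subset_bipolar (h : ∀ x ∈ K, ∀ y ∈ polarBody K, (inner ℝ y x : ℝ) ≤ 1) :
    K ⊆ polarBody (polarBody K) := fun x hx y hy => h x hx y hy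

lemma bipolar (hC : Convex ℝ K) (hcl : IsClosed K) (h0 : (0:EuclideanSpace ℝ (Fin n)) ∈ K) :
    polarBody (polarBody K) = K := by
  apply Set.Subset.antisymm
  · intro x hx
    by_contra hxK
    obtain ⟨f, s, hfC, hsx⟩ := geometric_hahn_banach_closed_point hC hcl hxK
    have hs0 : 0 < s := by simpa using hfC 0 h0
    set y := (InnerProductSpace.toDual ℝ (EuclideanSpace ℝ (Fin n))).symm (s⁻¹ • f) with hydef
    have hyval : ∀ z, ⟪y, z⟫ = s⁻¹ * f z := by
      intro z
      rw [hydef, InnerProductSpace.toDual_symm_apply]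
      rfl
    have hyP : y ∈ polarBody K := by
      intro z hz
      rw [real_inner_comm, hyval]
      rw [inv_mul_le_iff₀ hs0, mul_one]
      exact (hfC z hz).le
    have := hx y hyP
    rw [hyval, inv_mul_le_iff₀ hs0, mul_one] at this
    exact absurd this (not_le.2 hsx)
  · intro x hx y hy
    rw [real_inner_comm]
    exact hy x hx

lemma interior_ball (hKint : (0:EuclideanSpace ℝ (Fin n)) ∈ interior K) :
    ∃ ε > 0, Metric.ball (0:EuclideanSpace ℝ (Fin n)) ε ⊆ K := by
  obtain ⟨ε, hε, hball⟩ := Metric.mem_nhds_iff.1 (mem_interior_iff_mem_nhds.1 hKint)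
  exact ⟨ε, hε, hball⟩

lemma radial_dual (hKcp : IsCompact K) (hKcv : Convex ℝ K)
    (hKint : (0:EuclideanSpace ℝ (Fin n)) ∈ interior K) (hu : ‖u‖ = 1) :
    (radialFn K u)⁻¹ = suppFn (polarBody K) u := by
  obtain ⟨ε, hε, hball⟩ := interior_ball hKint
  set S : Set ℝ := {r : ℝ | r • u ∈ K} with hSdef
  have hScl : IsClosed S := hKcp.isClosed.preimage (continuous_id.smul continuous_const)
  obtain ⟨R, hR⟩ := hKcp.isBounded.subset_closedBall 0
  have hSsub : S ⊆ Set.Icc (-R) R := by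
    intro r hr
    have h1 : ‖r • u‖ ≤ R := by
      have := hR hr; rwa [Metric.mem_closedBall, dist_zero_right] at this
    rw [norm_smul, Real.norm_eq_abs, hu, mul_one] at h1
    exact abs_le.1 h1
  have hScp : IsCompact S := (isCompact_Icc.of_isClosed_subset hScl hSsub)
  have hhalf : ε / 2 ∈ S := by
    apply hball
    rw [Metric.mem_ball, dist_zero_right, norm_smul, Real.norm_eq_abs, hu, mul_one,
      abs_of_pos (half_pos hε)]
    linarith
  have hSne : S.Nonempty := ⟨ε / 2, hhalf⟩
  have hmem : sSup S ∈ S := hScp.sSup_mem hSne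
  have hpos : 0 < sSup S := lt_of_lt_of_le (half_pos hε) (le_csSup hScp.bddAbove hhalf)
  set r : ℝ := sSup S with hrdef
  have hrad : radialFn K u = r := rfl
  have hPcp : IsCompact (polarBody K) := polar_isCompact hε hball
  have hPne : (polarBody K).Nonempty := ⟨0, zero_mem_polar⟩
  rw [hrad]
  refine le_antisymm ?_ ?_
  · -- r⁻¹ ≤ suppFn: supporting functional at r • u
    have hnotint : r • u ∉ interior K := by
      intro hc
      obtain ⟨δ, hδ, hb⟩ := Metric.isOpen_iff.1 isOpen_interior _ hc
      have hmem2 : (r + δ / 2) • u ∈ interior K := by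
        apply hb
        rw [Metric.mem_ball, dist_eq_norm, ← sub_smul]
        have h9 : r + δ / 2 - r = δ / 2 := by ring
        rw [h9, norm_smul, Real.norm_eq_abs, hu, mul_one, abs_of_pos (half_pos hδ)]
        linarith
      have : r + δ / 2 ∈ S := by
        show (r + δ / 2) • u ∈ K
        exact interior_subset hmem2
      have := le_csSup hScp.bddAbove this
      linarith
    obtain ⟨f, hf⟩ := geometric_hahn_banach_open_point hKcv.interior isOpen_interior hnotint
    set c : ℝ := f (r • u) with hcdef
    have hc0 : 0 < c := by
      have := hf 0 hKint
      rwa [map_zero] at this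
    have hKa : ∀ a ∈ K, f a ≤ c := by
      intro a ha
      by_contra h
      push_neg at h
      have hfa : 0 < f a := lt_trans hc0 h
      set t : ℝ := (1 - c / f a) / 2 with htdef
      have ht1 : c / f a < 1 := (div_lt_one hfa).2 h
      have ht : t ∈ Set.Ioc (0:ℝ) 1 := by
        constructor
        · rw [htdef]; have : 0 < c / f a := div_pos hc0 hfa; linarith
        · rw [htdef]; have : 0 < c / f a := div_pos hc0 hfa; linarith
      have hmemi := hKcv.add_smul_sub_mem_interior ha hKint ht
      have := hf _ hmemi
      have heq : a + t • ((0:EuclideanSpace ℝ (Fin n)) - a) = (1 - t) • a := by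
        rw [zero_sub, smul_neg, sub_smul, one_smul]; abel
      rw [heq, f.map_smul, smul_eq_mul] at this
      -- (1 - t) * f a < c, but (1 - t) * f a = (1 + c / f a)/2 * f a = (f a + c)/2 > c
      have hcalc : (1 - t) * f a = (f a + c) / 2 := by
        rw [htdef]; field_simp; ring
      rw [hcalc] at this
      linarith
    set y := (InnerProductSpace.toDual ℝ (EuclideanSpace ℝ (Fin n))).symm (c⁻¹ • f) with hydef
    have hyval : ∀ z, ⟪y, z⟫ = c⁻¹ * f z := by
      intro z
      rw [hydef, InnerProductSpace.toDual_symm_apply]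
      rfl
    have hyP : y ∈ polarBody K := by
      intro z hz
      rw [real_inner_comm, hyval, inv_mul_le_iff₀ hc0, mul_one]
      exact hKa z hz
    have hyu : ⟪y, u⟫ = r⁻¹ := by
      have hfu : f (r • u) = r * f u := by rw [f.map_smul, smul_eq_mul]
      have : f u = c / r := by
        rw [eq_div_iff hpos.ne']
        rw [hcdef, hfu]; ring
      rw [hyval, this]
      field_simp
    rw [← hyu]
    exact le_suppFn hPcp hyP
  · refine suppFn_le hPne fun y hy => ?_
    have h1 := hy (r • u) hmem
    rw [real_inner_smul_left, real_inner_comm] at h1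
    have h2 := mul_le_mul_of_nonneg_left h1 (inv_pos.2 hpos).le
    rw [← mul_assoc, inv_mul_cancel₀ hpos.ne', one_mul, mul_one] at h2
    exact h2

lemma le_suppFn_inter_of_le (hAcp : IsCompact A) (hBcp : IsCompact B)
    (h0A : (0:EuclideanSpace ℝ (Fin n)) ∈ A) (h0B : (0:EuclideanSpace ℝ (Fin n)) ∈ B)
    (hU : Convex ℝ (A ∪ B)) (hle : suppFn A u ≤ suppFn B u) :
    suppFn A u ≤ suppFn (A ∩ B) u := by
  obtain ⟨a, haA, ha⟩ := exists_suppFn hAcp ⟨0, h0A⟩ u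
  obtain ⟨b, hbB, hb⟩ := exists_suppFn hBcp ⟨0, h0B⟩ u
  have hcont : Continuous fun t : ℝ => (1 - t) • a + t • b :=
    ((continuous_const.sub continuous_id).smul continuous_const).add
      (continuous_id.smul continuous_const)
  set S : Set ℝ := Set.Icc (0:ℝ) 1 ∩ {t : ℝ | (1 - t) • a + t • b ∈ A} with hSdef
  have hScl : IsClosed S := isClosed_Icc.inter (hAcp.isClosed.preimage hcont)
  have hScp : IsCompact S := isCompact_Icc.of_isClosed_subset hScl Set.inter_subset_left
  have h0S : (0:ℝ) ∈ S := by
    refine ⟨⟨le_refl 0, zero_le_one⟩, ?_⟩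
    show (1 - (0:ℝ)) • a + (0:ℝ) • b ∈ A
    simpa using haA
  have hmem : sSup S ∈ S := hScp.sSup_mem ⟨0, h0S⟩
  set t0 : ℝ := sSup S with ht0def
  set c : EuclideanSpace ℝ (Fin n) := (1 - t0) • a + t0 • b with hcdef
  have hcA : c ∈ A := hmem.2
  have ht0mem : t0 ∈ Set.Icc (0:ℝ) 1 := hmem.1
  have hcB : c ∈ B := by
    rcases eq_or_lt_of_le ht0mem.2 with h1 | h1
    · rw [hcdef, h1]; simpa using hbB
    · have hne : Filter.NeBot (nhdsWithin t0 (Set.Ioi t0)) := inferInstance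
      have htend : Filter.Tendsto (fun t : ℝ => (1 - t) • a + t • b)
          (nhdsWithin t0 (Set.Ioi t0)) (nhds c) :=
        ((hcont.tendsto t0).mono_left nhdsWithin_le_nhds)
      have hev : ∀ᶠ t in nhdsWithin t0 (Set.Ioi t0),
          (1 - t) • a + t • b ∈ B := by
        filter_upwards [Ioo_mem_nhdsGT_of_mem ⟨le_refl t0, h1⟩] with t ht
        have htI : t ∈ Set.Icc (0:ℝ) 1 := ⟨le_trans ht0mem.1 ht.1.le, ht.2.le⟩
        have hseg : (1 - t) • a + t • b ∈ A ∪ B := by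
          apply hU.segment_subset (Set.mem_union_left _ haA) (Set.mem_union_right _ hbB)
          exact ⟨1 - t, t, by linarith [htI.1, htI.2], htI.1, by ring, rfl⟩
        rcases hseg with hA' | hB'
        · exfalso
          have : t ∈ S := ⟨htI, hA'⟩
          have := le_csSup hScp.bddAbove this
          exact absurd this (not_le.2 ht.1)
        · exact hB'
      exact hBcp.isClosed.closure_subset (mem_closure_of_tendsto htend hev)
  have hIcp : IsCompact (A ∩ B) := hAcp.inter hBcp
  have hcle : ⟪c, u⟫ ≤ suppFn (A ∩ B) u := le_suppFn hIcp ⟨hcA, hcB⟩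
  have hcval : ⟪c, u⟫ = (1 - t0) * ⟪a, u⟫ + t0 * ⟪b, u⟫ := by
    rw [hcdef, inner_add_left, real_inner_smul_left, real_inner_smul_left]
  have hba : ⟪a, u⟫ ≤ ⟪b, u⟫ := by rw [← ha, ← hb]; exact hle
  have : ⟪a, u⟫ ≤ ⟪c, u⟫ := by
    rw [hcval]; nlinarith [ht0mem.1, ht0mem.2]
  rw [ha]
  linarith

lemma min_le_suppFn_inter (hAcp : IsCompact A) (hBcp : IsCompact B)
    (h0A : (0:EuclideanSpace ℝ (Fin n)) ∈ A) (h0B : (0:EuclideanSpace ℝ (Fin n)) ∈ B)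
    (hU : Convex ℝ (A ∪ B)) (u : EuclideanSpace ℝ (Fin n)) :
    min (suppFn A u) (suppFn B u) ≤ suppFn (A ∩ B) u := by
  rcases le_total (suppFn A u) (suppFn B u) with h | h
  · rw [min_eq_left h]
    exact le_suppFn_inter_of_le hAcp hBcp h0A h0B hU h
  · rw [min_eq_right h]
    have hU' : Convex ℝ (B ∪ A) := by rwa [Set.union_comm]
    have := le_suppFn_inter_of_le hBcp hAcp h0B h0A hU' h
    rwa [Set.inter_comm] at this

set_option maxHeartbeats 1000000 in
lemma convex_union_aux (hAcp : IsCompact A) (hBcp : IsCompact B)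
    (hAcv : Convex ℝ A) (hBcv : Convex ℝ B)
    (h0A : (0:EuclideanSpace ℝ (Fin n)) ∈ A) (h0B : (0:EuclideanSpace ℝ (Fin n)) ∈ B)
    (h : ∀ w, min (suppFn A w) (suppFn B w) ≤ suppFn (A ∩ B) w)
    {x z : EuclideanSpace ℝ (Fin n)} (hx : x ∈ A) (hz : z ∈ B)
    {p q : ℝ} (hp : 0 ≤ p) (hq : 0 ≤ q) (hpq : p + q = 1) :
    p • x + q • z ∈ A ∪ B := by
  rcases eq_or_lt_of_le hp with hp0 | hp0
  · have : q = 1 := by linarith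
    rw [← hp0, this]; simpa using Or.inr hz
  rcases eq_or_lt_of_le hq with hq0 | hq0
  · have : p = 1 := by linarith
    rw [← hq0, this]; simpa using Or.inl hx
  by_contra hc
  rw [Set.mem_union] at hc
  push_neg at hc
  obtain ⟨hcA, hcB⟩ := hc
  set cpt : EuclideanSpace ℝ (Fin n) := p • x + q • z with hcptdef
  obtain ⟨f, s1, hfA, hs1⟩ := geometric_hahn_banach_closed_point hAcv hAcp.isClosed hcA
  obtain ⟨g, s2, hgB, hs2⟩ := geometric_hahn_banach_closed_point hBcv hBcp.isClosed hcB
  set u1 := (InnerProductSpace.toDual ℝ (EuclideanSpace ℝ (Fin n))).symm f with hu1def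
  set u2 := (InnerProductSpace.toDual ℝ (EuclideanSpace ℝ (Fin n))).symm g with hu2def
  have hu1val : ∀ w, ⟪w, u1⟫ = f w := by
    intro w; rw [real_inner_comm, hu1def, InnerProductSpace.toDual_symm_apply]
  have hu2val : ∀ w, ⟪w, u2⟫ = g w := by
    intro w; rw [real_inner_comm, hu2def, InnerProductSpace.toDual_symm_apply]
  have hA1 : suppFn A u1 < ⟪cpt, u1⟫ := by
    rw [hu1val]
    calc suppFn A u1 ≤ s1 := suppFn_le ⟨0, h0A⟩ fun w hw => by rw [hu1val]; exact (hfA w hw).le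
      _ < f cpt := hs1
  have hB2 : suppFn B u2 < ⟪cpt, u2⟫ := by
    rw [hu2val]
    calc suppFn B u2 ≤ s2 := suppFn_le ⟨0, h0B⟩ fun w hw => by rw [hu2val]; exact (hgB w hw).le
      _ < g cpt := hs2
  have hcw : ∀ w : EuclideanSpace ℝ (Fin n),
      ⟪cpt, w⟫ ≤ p * suppFn A w + q * suppFn B w := by
    intro w
    have : ⟪cpt, w⟫ = p * ⟪x, w⟫ + q * ⟪z, w⟫ := by
      rw [hcptdef, inner_add_left, real_inner_smul_left, real_inner_smul_left]
    rw [this]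
    gcongr
    · exact le_suppFn hAcp hx
    · exact le_suppFn hBcp hz
  -- derive suppFn A u1 < suppFn B u1 and suppFn B u2 < suppFn A u2
  have hAB1 : suppFn A u1 < suppFn B u1 := by
    have h1 : ⟪cpt, u1⟫ ≤ p * suppFn A u1 + q * suppFn B u1 := hcw u1
    by_contra hcon
    push_neg at hcon
    have h2 := mul_le_mul_of_nonneg_left hcon hq
    have h3 : p * suppFn A u1 + q * suppFn A u1 = suppFn A u1 := by
      rw [← add_mul, hpq, one_mul]
    linarith
  have hBA2 : suppFn B u2 < suppFn A u2 := by
    have h1 : ⟪cpt, u2⟫ ≤ p * suppFn A u2 + q * suppFn B u2 := hcw u2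
    by_contra hcon
    push_neg at hcon
    have h2 := mul_le_mul_of_nonneg_left hcon hp
    have h3 : p * suppFn B u2 + q * suppFn B u2 = suppFn B u2 := by
      rw [← add_mul, hpq, one_mul]
    linarith
  -- intermediate value
  have hAne : A.Nonempty := ⟨0, h0A⟩
  have hBne : B.Nonempty := ⟨0, h0B⟩
  set w : ℝ → EuclideanSpace ℝ (Fin n) := fun t => (1 - t) • u1 + t • u2 with hwdef
  have hwcont : Continuous w :=
    ((continuous_const.sub continuous_id).smul continuous_const).add
      (continuous_id.smul continuous_const)
  set ψ : ℝ → ℝ := fun t => suppFn A (w t) - suppFn B (w t) with hψdef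
  have hψcont : Continuous ψ :=
    ((continuous_suppFn hAcp hAne).comp hwcont).sub ((continuous_suppFn hBcp hBne).comp hwcont)
  have hw0 : w 0 = u1 := by rw [hwdef]; simp
  have hw1 : w 1 = u2 := by rw [hwdef]; simp
  have hψ0 : ψ 0 < 0 := by rw [hψdef]; simp only [hw0]; linarith
  have hψ1 : 0 < ψ 1 := by rw [hψdef]; simp only [hw1]; linarith
  have : (0:ℝ) ∈ ψ '' (Set.Icc 0 1) := by
    apply intermediate_value_Icc zero_le_one hψcont.continuousOn
    exact ⟨hψ0.le, hψ1.le⟩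
  obtain ⟨t0, ht0, hψt0⟩ := this
  set w0 := w t0 with hw0def
  have hEq : suppFn A w0 = suppFn B w0 := by
    have := sub_eq_zero.1 hψt0
    exact this
  have hIcp : IsCompact (A ∩ B) := hAcp.inter hBcp
  have hIne : (A ∩ B).Nonempty := ⟨0, h0A, h0B⟩
  have hcombo : suppFn (A ∩ B) w0 ≤
      (1 - t0) * suppFn (A ∩ B) u1 + t0 * suppFn (A ∩ B) u2 := by
    rw [hw0def, hwdef]
    exact suppFn_combo hIcp hIne (by linarith [ht0.2]) ht0.1
  have hI1 : suppFn (A ∩ B) u1 ≤ suppFn A u1 := suppFn_mono hAcp hIne Set.inter_subset_left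
  have hI2 : suppFn (A ∩ B) u2 ≤ suppFn B u2 := suppFn_mono hBcp hIne Set.inter_subset_right
  have hstrict : suppFn (A ∩ B) w0 < (1 - t0) * ⟪cpt, u1⟫ + t0 * ⟪cpt, u2⟫ := by
    have h6 : suppFn (A ∩ B) u1 < ⟪cpt, u1⟫ := lt_of_le_of_lt hI1 hA1
    have h7 : suppFn (A ∩ B) u2 < ⟪cpt, u2⟫ := lt_of_le_of_lt hI2 hB2
    rcases le_or_gt t0 (1/2) with hhalf | hhalf
    · have h5 : (0:ℝ) < 1 - t0 := by linarith
      have e1 := mul_lt_mul_of_pos_left h6 h5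
      have e2 := mul_le_mul_of_nonneg_left h7.le ht0.1
      linarith
    · have h5 : (0:ℝ) ≤ 1 - t0 := by linarith [ht0.2]
      have e1 := mul_le_mul_of_nonneg_left h6.le h5
      have e2 := mul_lt_mul_of_pos_left h7 (by linarith : (0:ℝ) < t0)
      linarith
  have hcw0 : ⟪cpt, w0⟫ = (1 - t0) * ⟪cpt, u1⟫ + t0 * ⟪cpt, u2⟫ := by
    rw [hw0def, hwdef, inner_add_right, real_inner_smul_right, real_inner_smul_right]
  have hfinal : ⟪cpt, w0⟫ ≤ suppFn A w0 := by
    have := hcw w0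
    rw [← hEq] at this
    calc ⟪cpt, w0⟫ ≤ p * suppFn A w0 + q * suppFn A w0 := this
      _ = suppFn A w0 := by rw [← add_mul, hpq, one_mul]
  have hmin := h w0
  rw [hEq, min_self] at hmin
  rw [← hEq] at hmin
  linarith [hstrict, hcw0 ▸ hfinal]

lemma convex_union_of_min_le (hAcp : IsCompact A) (hBcp : IsCompact B)
    (hAcv : Convex ℝ A) (hBcv : Convex ℝ B)
    (h0A : (0:EuclideanSpace ℝ (Fin n)) ∈ A) (h0B : (0:EuclideanSpace ℝ (Fin n)) ∈ B)
    (h : ∀ w, min (suppFn A w) (suppFn B w) ≤ suppFn (A ∩ B) w) :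
    Convex ℝ (A ∪ B) := by
  intro x hx z hz p q hp hq hpq
  rcases hx with hxA | hxB <;> rcases hz with hzA | hzB
  · exact Or.inl (hAcv hxA hzA hp hq hpq)
  · exact convex_union_aux hAcp hBcp hAcv hBcv h0A h0B h hxA hzB hp hq hpq
  · have h' : ∀ w, min (suppFn B w) (suppFn A w) ≤ suppFn (B ∩ A) w := by
      intro w; rw [min_comm, Set.inter_comm]; exact h w
    have := convex_union_aux hBcp hAcp hBcv hAcv h0B h0A h' hxB hzA hp hq hpq
    rwa [Set.union_comm] at this
  · exact Or.inr (hBcv hxB hzB hp hq hpq)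

lemma toSphere_univ_ne_zero (hn : n ≠ 0) :
    (volume : Measure (EuclideanSpace ℝ (Fin n))).toSphere Set.univ ≠ 0 := by
  rw [Measure.toSphere_apply_univ]
  refine mul_ne_zero ?_ (Metric.measure_ball_pos volume 0 one_pos).ne'
  simp [finrank_euclideanSpace_fin, hn]

lemma sphereProb_isProb (hn : n ≠ 0) : IsProbabilityMeasure (sphereProb n) := by
  constructor
  rw [sphereProb, Measure.smul_apply, smul_eq_mul]
  exact ENNReal.inv_mul_cancel (toSphere_univ_ne_zero hn) (measure_ne_top _ _)

lemma cone_isOpen_nonempty {U : Set (Metric.sphere (0 : EuclideanSpace ℝ (Fin n)) 1)}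
    (hU : IsOpen U) (hne : U.Nonempty) :
    IsOpen (Set.Ioo (0:ℝ) 1 • (Subtype.val '' U)) ∧
      (Set.Ioo (0:ℝ) 1 • (Subtype.val '' U)).Nonempty := by
  constructor
  · obtain ⟨V, hV, hVU⟩ := isOpen_induced_iff.1 hU
    have hCeq : Set.Ioo (0:ℝ) 1 • (Subtype.val '' U) =
        {x : EuclideanSpace ℝ (Fin n) | ‖x‖ ∈ Set.Ioo (0:ℝ) 1} ∩
          (fun x : EuclideanSpace ℝ (Fin n) => ‖x‖⁻¹ • x) ⁻¹' V := by
      ext x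
      constructor
      · rintro ⟨r, hr, v, hv, rfl⟩
        obtain ⟨w, hw, rfl⟩ := hv
        have hwn : ‖(w : EuclideanSpace ℝ (Fin n))‖ = 1 := by
          have := w.2
          rwa [Metric.mem_sphere, dist_zero_right] at this
        have hxn : ‖r • (w : EuclideanSpace ℝ (Fin n))‖ = r := by
          rw [norm_smul, Real.norm_eq_abs, hwn, mul_one, abs_of_pos hr.1]
        refine ⟨by rw [Set.mem_setOf_eq, hxn]; exact hr, ?_⟩
        show ‖r • (w : EuclideanSpace ℝ (Fin n))‖⁻¹ • r • (w : EuclideanSpace ℝ (Fin n)) ∈ V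
        rw [hxn, smul_smul, inv_mul_cancel₀ hr.1.ne', one_smul]
        rw [← hVU] at hw
        exact hw
      · rintro ⟨hx1, hx2⟩
        rw [Set.mem_setOf_eq] at hx1
        set w : Metric.sphere (0 : EuclideanSpace ℝ (Fin n)) 1 :=
          ⟨‖x‖⁻¹ • x, by
            rw [Metric.mem_sphere, dist_zero_right, norm_smul, Real.norm_eq_abs,
              abs_of_pos (inv_pos.2 hx1.1), inv_mul_cancel₀ hx1.1.ne']⟩ with hwdef
        have hwU : w ∈ U := by rw [← hVU]; exact hx2
        refine ⟨‖x‖, hx1, _, Set.mem_image_of_mem _ hwU, ?_⟩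
        show ‖x‖ • ‖x‖⁻¹ • x = x
        rw [smul_smul, mul_inv_cancel₀ hx1.1.ne', one_smul]
    rw [hCeq]
    refine ContinuousOn.isOpen_inter_preimage ?_ (isOpen_Ioo.preimage continuous_norm) hV
    exact (continuous_norm.continuousOn.inv₀ fun x hx => by
      simpa using (show (0:ℝ) < ‖x‖ from hx.1).ne').smul continuousOn_id
  · obtain ⟨u0, hu0⟩ := hne
    exact ⟨_, Set.smul_mem_smul (by norm_num : (1/2 : ℝ) ∈ Set.Ioo (0:ℝ) 1)
      (Set.mem_image_of_mem _ hu0)⟩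

lemma sphereProb_isOpenPos (hn : n ≠ 0) : (sphereProb n).IsOpenPosMeasure := by
  constructor
  intro U hU hne
  rw [sphereProb, Measure.smul_apply, smul_eq_mul]
  refine mul_ne_zero (ENNReal.inv_ne_zero.2 (measure_ne_top _ _)) ?_
  rw [Measure.toSphere_apply' _ hU.measurableSet]
  obtain ⟨hCo, hCne⟩ := cone_isOpen_nonempty hU hne
  refine mul_ne_zero ?_ (hCo.measure_pos volume hCne).ne'
  simp [finrank_euclideanSpace_fin, hn]

lemma cont_integrable {f : Metric.sphere (0 : EuclideanSpace ℝ (Fin n)) 1 → ℝ}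
    (hf : Continuous f) (μ : Measure (Metric.sphere (0 : EuclideanSpace ℝ (Fin n)) 1))
    [IsFiniteMeasure μ] : Integrable f μ := by
  refine hf.integrable_of_hasCompactSupport ?_
  exact isCompact_univ.of_isClosed_subset (isClosed_tsupport f) (Set.subset_univ _)

lemma abs_sub_eq_min (a b : ℝ) : |a - b| = a + b - 2 * min a b := by
  rcases le_total a b with h | h
  · rw [min_eq_left h, abs_of_nonpos (by linarith)]; ring
  · rw [min_eq_right h, abs_of_nonneg (by linarith)]; ring

lemma min_smul_eq {r a b : ℝ} (hr : 0 ≤ r) : min (r * a) (r * b) = r * min a b := by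
  rcases le_total a b with h | h
  · rw [min_eq_left h, min_eq_left (mul_le_mul_of_nonneg_left h hr)]
  · rw [min_eq_right h, min_eq_right (mul_le_mul_of_nonneg_left h hr)]

lemma equality_iff (hKcp : IsCompact K) (hKcv : Convex ℝ K)
    (hKint : (0:EuclideanSpace ℝ (Fin n)) ∈ interior K)
    {L : Set (EuclideanSpace ℝ (Fin n))} (hLcp : IsCompact L) (hLcv : Convex ℝ L)
    (hLint : (0:EuclideanSpace ℝ (Fin n)) ∈ interior L) :
    (∀ u : Metric.sphere (0 : EuclideanSpace ℝ (Fin n)) 1,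
        min (suppFn (polarBody K) ↑u) (suppFn (polarBody L) ↑u)
          = suppFn (polarBody K ∩ polarBody L) ↑u)
      ↔ polarBody K ∪ polarBody L = polarBody (K ∩ L) := by
  obtain ⟨εK, hεK, hballK⟩ := interior_ball hKint
  obtain ⟨εL, hεL, hballL⟩ := interior_ball hLint
  set A := polarBody K with hAdef
  set B := polarBody L with hBdef
  have hAcp : IsCompact A := polar_isCompact hεK hballK
  have hBcp : IsCompact B := polar_isCompact hεL hballL
  have h0A : (0:EuclideanSpace ℝ (Fin n)) ∈ A := zero_mem_polar
  have h0B : (0:EuclideanSpace ℝ (Fin n)) ∈ B := zero_mem_polar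
  have hIcp : IsCompact (A ∩ B) := hAcp.inter hBcp
  have hIne : (A ∩ B).Nonempty := ⟨0, h0A, h0B⟩
  have hunion_eq_of_convex : Convex ℝ (A ∪ B) → A ∪ B = polarBody (K ∩ L) := by
    intro hUcv
    have h1 : polarBody (A ∪ B) = K ∩ L := by
      rw [polar_union]
      show polarBody (polarBody K) ∩ polarBody (polarBody L) = K ∩ L
      rw [bipolar hKcv hKcp.isClosed (interior_subset hKint),
        bipolar hLcv hLcp.isClosed (interior_subset hLint)]
    have h2 : polarBody (polarBody (A ∪ B)) = A ∪ B :=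
      bipolar hUcv (hAcp.union hBcp).isClosed (Set.mem_union_left _ h0A)
    rw [← h1, h2]
  constructor
  · intro hsphere
    have hall : ∀ w, min (suppFn A w) (suppFn B w) ≤ suppFn (A ∩ B) w := by
      intro w
      rcases eq_or_ne w 0 with rfl | hw
      · rw [suppFn_zero ⟨0, h0A⟩, suppFn_zero ⟨0, h0B⟩, suppFn_zero hIne, min_self]
      · have hnw : 0 < ‖w‖ := norm_pos_iff.2 hw
        set u : Metric.sphere (0 : EuclideanSpace ℝ (Fin n)) 1 :=
          ⟨‖w‖⁻¹ • w, by
            rw [Metric.mem_sphere, dist_zero_right, norm_smul, Real.norm_eq_abs,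
              abs_of_pos (inv_pos.2 hnw), inv_mul_cancel₀ hnw.ne']⟩ with hudef
        have hwu : w = ‖w‖ • (u : EuclideanSpace ℝ (Fin n)) := by
          rw [hudef, smul_smul, mul_inv_cancel₀ hnw.ne', one_smul]
        rw [hwu, suppFn_smul hAcp ⟨0, h0A⟩ hnw, suppFn_smul hBcp ⟨0, h0B⟩ hnw,
          suppFn_smul hIcp hIne hnw, min_smul_eq (norm_nonneg w), hsphere u]
    exact hunion_eq_of_convex (convex_union_of_min_le hAcp hBcp polar_convex polar_convex
      h0A h0B hall)
  · intro hset u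
    have hUcv : Convex ℝ (A ∪ B) := hset ▸ polar_convex
    refine le_antisymm (min_le_suppFn_inter hAcp hBcp h0A h0B hUcv _) ?_
    exact le_min (suppFn_mono hAcp hIne Set.inter_subset_left)
      (suppFn_mono hBcp hIne Set.inter_subset_right)

end Stmt10Aux

open Stmt10Aux in
/-- For convex bodies `K, L ⊆ ℝⁿ` (`n ≥ 2`) containing the origin in their interiors:
`∫ |ρ_K⁻¹ - ρ_L⁻¹| dσ = ∫ |h_{K°} - h_{L°}| dσ ≤ ∫ (h_{K°} + h_{L°} - 2 h_{K°∩L°}) dσ`,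
with equality if and only if `K° ∪ L° = (K ∩ L)°`. -/
theorem stmt10 {n : ℕ} (hn : 2 ≤ n)
    (K L : Set (EuclideanSpace ℝ (Fin n)))
    (hKcp : IsCompact K) (hKcv : Convex ℝ K) (hKint : 0 ∈ interior K)
    (hLcp : IsCompact L) (hLcv : Convex ℝ L) (hLint : 0 ∈ interior L) :
    (∫ u : Metric.sphere (0 : EuclideanSpace ℝ (Fin n)) 1,
        |(radialFn K ↑u)⁻¹ - (radialFn L ↑u)⁻¹| ∂(sphereProb n))
      = (∫ u : Metric.sphere (0 : EuclideanSpace ℝ (Fin n)) 1,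
          |suppFn (polarBody K) ↑u - suppFn (polarBody L) ↑u| ∂(sphereProb n))
    ∧ (∫ u : Metric.sphere (0 : EuclideanSpace ℝ (Fin n)) 1,
          |suppFn (polarBody K) ↑u - suppFn (polarBody L) ↑u| ∂(sphereProb n))
      ≤ (∫ u : Metric.sphere (0 : EuclideanSpace ℝ (Fin n)) 1,
          (suppFn (polarBody K) ↑u + suppFn (polarBody L) ↑u
            - 2 * suppFn (polarBody K ∩ polarBody L) ↑u) ∂(sphereProb n))
    ∧ ((∫ u : Metric.sphere (0 : EuclideanSpace ℝ (Fin n)) 1,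
          |suppFn (polarBody K) ↑u - suppFn (polarBody L) ↑u| ∂(sphereProb n))
        = (∫ u : Metric.sphere (0 : EuclideanSpace ℝ (Fin n)) 1,
            (suppFn (polarBody K) ↑u + suppFn (polarBody L) ↑u
              - 2 * suppFn (polarBody K ∩ polarBody L) ↑u) ∂(sphereProb n))
        ↔ polarBody K ∪ polarBody L = polarBody (K ∩ L)) := by
  have hn0 : n ≠ 0 := by omega
  haveI := sphereProb_isProb (n := n) hn0
  haveI := sphereProb_isOpenPos (n := n) hn0
  obtain ⟨εK, hεK, hballK⟩ := interior_ball hKint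
  obtain ⟨εL, hεL, hballL⟩ := interior_ball hLint
  have hAcp : IsCompact (polarBody K) := polar_isCompact hεK hballK
  have hBcp : IsCompact (polarBody L) := polar_isCompact hεL hballL
  have h0A : (0:EuclideanSpace ℝ (Fin n)) ∈ polarBody K := zero_mem_polar
  have h0B : (0:EuclideanSpace ℝ (Fin n)) ∈ polarBody L := zero_mem_polar
  have hAne : (polarBody K).Nonempty := ⟨0, h0A⟩
  have hBne : (polarBody L).Nonempty := ⟨0, h0B⟩
  have hIcp : IsCompact (polarBody K ∩ polarBody L) := hAcp.inter hBcp
  have hIne : (polarBody K ∩ polarBody L).Nonempty := ⟨0, h0A, h0B⟩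
  have hfA : Continuous fun u : Metric.sphere (0 : EuclideanSpace ℝ (Fin n)) 1 =>
      suppFn (polarBody K) ↑u := (continuous_suppFn hAcp hAne).comp continuous_subtype_val
  have hfB : Continuous fun u : Metric.sphere (0 : EuclideanSpace ℝ (Fin n)) 1 =>
      suppFn (polarBody L) ↑u := (continuous_suppFn hBcp hBne).comp continuous_subtype_val
  have hfI : Continuous fun u : Metric.sphere (0 : EuclideanSpace ℝ (Fin n)) 1 =>
      suppFn (polarBody K ∩ polarBody L) ↑u :=
    (continuous_suppFn hIcp hIne).comp continuous_subtype_val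
  have hiAbs : Integrable (fun u : Metric.sphere (0 : EuclideanSpace ℝ (Fin n)) 1 =>
      |suppFn (polarBody K) ↑u - suppFn (polarBody L) ↑u|) (sphereProb n) :=
    cont_integrable (hfA.sub hfB).abs _
  have hiRHS : Integrable (fun u : Metric.sphere (0 : EuclideanSpace ℝ (Fin n)) 1 =>
      suppFn (polarBody K) ↑u + suppFn (polarBody L) ↑u
        - 2 * suppFn (polarBody K ∩ polarBody L) ↑u) (sphereProb n) :=
    cont_integrable ((hfA.add hfB).sub (continuous_const.mul hfI)) _
  have hfIle : ∀ u : Metric.sphere (0 : EuclideanSpace ℝ (Fin n)) 1,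
      suppFn (polarBody K ∩ polarBody L) ↑u
        ≤ min (suppFn (polarBody K) ↑u) (suppFn (polarBody L) ↑u) := fun u =>
    le_min (suppFn_mono hAcp hIne Set.inter_subset_left)
      (suppFn_mono hBcp hIne Set.inter_subset_right)
  have hcoe : ∀ u : Metric.sphere (0 : EuclideanSpace ℝ (Fin n)) 1,
      ‖(u : EuclideanSpace ℝ (Fin n))‖ = 1 := fun u => by
    have := u.2
    rwa [Metric.mem_sphere, dist_zero_right] at this
  refine ⟨?_, ?_, ?_⟩
  · have heq : (fun u : Metric.sphere (0 : EuclideanSpace ℝ (Fin n)) 1 =>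
        |(radialFn K ↑u)⁻¹ - (radialFn L ↑u)⁻¹|)
        = fun u : Metric.sphere (0 : EuclideanSpace ℝ (Fin n)) 1 =>
          |suppFn (polarBody K) ↑u - suppFn (polarBody L) ↑u| := by
      funext u
      rw [radial_dual hKcp hKcv hKint (hcoe u), radial_dual hLcp hLcv hLint (hcoe u)]
    rw [heq]
  · refine integral_mono hiAbs hiRHS fun u => ?_
    have h1 := hfIle u
    have h2 := abs_sub_eq_min (suppFn (polarBody K) ↑u) (suppFn (polarBody L) ↑u)
    simp only []
    rw [h2]
    linarith
  · set g : Metric.sphere (0 : EuclideanSpace ℝ (Fin n)) 1 → ℝ := fun u =>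
      min (suppFn (polarBody K) ↑u) (suppFn (polarBody L) ↑u)
        - suppFn (polarBody K ∩ polarBody L) ↑u with hgdef
    have hgcont : Continuous g := (hfA.min hfB).sub hfI
    have hgint : Integrable g (sphereProb n) := cont_integrable hgcont _
    have hg0 : 0 ≤ g := fun u => sub_nonneg.2 (hfIle u)
    have hdiff : (∫ u, (suppFn (polarBody K) ↑u + suppFn (polarBody L) ↑u
            - 2 * suppFn (polarBody K ∩ polarBody L) ↑u) ∂(sphereProb n))
          - (∫ u, |suppFn (polarBody K) ↑u - suppFn (polarBody L) ↑u| ∂(sphereProb n))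
        = 2 * ∫ u, g u ∂(sphereProb n) := by
      rw [← integral_sub hiRHS hiAbs, ← integral_const_mul]
      congr 1
      funext u
      rw [hgdef]
      simp only []
      rw [abs_sub_eq_min]
      ring
    have step1 : ((∫ u, |suppFn (polarBody K) ↑u - suppFn (polarBody L) ↑u| ∂(sphereProb n))
        = (∫ u, (suppFn (polarBody K) ↑u + suppFn (polarBody L) ↑u
            - 2 * suppFn (polarBody K ∩ polarBody L) ↑u) ∂(sphereProb n)))
        ↔ (∫ u, g u ∂(sphereProb n)) = 0 := by
      constructor
      · intro h
        have h2 : 2 * ∫ u, g u ∂(sphereProb n) = 0 := by rw [← hdiff, h]; ring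
        linarith
      · intro h; rw [h, mul_zero] at hdiff; linarith
    have step2 : (∫ u, g u ∂(sphereProb n)) = 0 ↔ g = 0 := by
      rw [integral_eq_zero_iff_of_nonneg hg0 hgint]
      exact Continuous.ae_eq_iff_eq (sphereProb n) hgcont continuous_const
    have step3 : g = 0 ↔ ∀ u : Metric.sphere (0 : EuclideanSpace ℝ (Fin n)) 1,
        min (suppFn (polarBody K) ↑u) (suppFn (polarBody L) ↑u)
          = suppFn (polarBody K ∩ polarBody L) ↑u := by
      rw [funext_iff]
      constructor
      · intro h u; have := h u; rw [hgdef] at this; simp only [Pi.zero_apply] at this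
        linarith [sub_eq_zero.1 this]
      · intro h u; rw [hgdef]; simp only [Pi.zero_apply]; rw [h u]; ring
    rw [step1, step2, step3]
    exact equality_iff hKcp hKcv hKint hLcp hLcv hLint
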